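/- Let X ⊆ ℝ (with the subspace topology). Then X satisfies S1(Ω,Γ) if, and only if, X satisfies Ω → (Γ)²₂: for every open ω-cover 𝒰 of X and every coloring of the 2-element subsets of 𝒰 with 2 colors, there exist a color j and a subfamily 𝒱 ⊆ 𝒰 which is a γ-cover of X such that every 2-element subset of 𝒱 receives color j. -/

import Mathlib

open Filter Set

/-- `f ≤* g`: `f n ≤ g n` for all but finitely many `n`. -/
def LeStar (f g : ℕ → ℕ) : Prop := ∀ᶠ n in Filter.atTop, f n ≤ g n

/-- A subset of Baire space is bounded if it has a `≤*`-upper bound. -/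
def BddFam (B : Set (ℕ → ℕ)) : Prop := ∃ g : ℕ → ℕ, ∀ f ∈ B, LeStar f g

/-- A subset of Baire space is dominating if every function is `≤*` below some member. -/
def DominatingFam (D : Set (ℕ → ℕ)) : Prop := ∀ g : ℕ → ℕ, ∃ f ∈ D, LeStar g f

/-- An open cover of a topological space. -/
def IsOpenCover {X : Type*} [TopologicalSpace X] (𝒰 : Set (Set X)) : Prop :=
  (∀ U ∈ 𝒰, IsOpen U) ∧ ⋃₀ 𝒰 = Set.univ

/-- The cover `𝒰` contains a finite subcover. -/
def HasFinSubcover {X : Type*} (𝒰 : Set (Set X)) : Prop :=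
  ∃ ℱ ⊆ 𝒰, ℱ.Finite ∧ ⋃₀ ℱ = Set.univ

/-- The Hurewicz property `Ufin(O,Γ)`. -/
def UfinOGamma (X : Type*) [TopologicalSpace X] : Prop :=
  ∀ 𝒰 : ℕ → Set (Set X),
    (∀ n, IsOpenCover (𝒰 n)) → (∀ n, ¬ HasFinSubcover (𝒰 n)) →
    ∃ ℱ : ℕ → Set (Set X),
      (∀ n, ℱ n ⊆ 𝒰 n ∧ (ℱ n).Finite) ∧
      ∀ x : X, ∀ᶠ n in Filter.atTop, x ∈ ⋃₀ ℱ n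

/-- An `ω`-cover: no single member covers the whole space, but every finite set is
contained in some member. -/
def IsOmegaCover {X : Type*} (𝒰 : Set (Set X)) : Prop :=
  ⋃₀ 𝒰 = Set.univ ∧ (∀ U ∈ 𝒰, U ≠ Set.univ) ∧
    ∀ F : Set X, F.Finite → ∃ U ∈ 𝒰, F ⊆ U

/-- A `γ`-cover: an infinite cover such that every point belongs to all but finitely many
members. -/
def IsGammaCover {X : Type*} (𝒰 : Set (Set X)) : Prop :=
  𝒰.Infinite ∧ ⋃₀ 𝒰 = Set.univ ∧ ∀ x : X, {U ∈ 𝒰 | x ∉ U}.Finite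

/-- An open `ω`-cover. -/
def IsOpenOmegaCover {X : Type*} [TopologicalSpace X] (𝒰 : Set (Set X)) : Prop :=
  (∀ U ∈ 𝒰, IsOpen U) ∧ IsOmegaCover 𝒰

/-- The Gerlits–Nagy property `S1(Ω,Γ)`. -/
def S1OmegaGamma (X : Type*) [TopologicalSpace X] : Prop :=
  ∀ 𝒰 : ℕ → Set (Set X), (∀ n, IsOpenOmegaCover (𝒰 n)) →
    ∃ U : ℕ → Set X, (∀ n, U n ∈ 𝒰 n) ∧ IsGammaCover (Set.range U)

/-- The partition property `Ω → (Γ)²₂`: for every open `ω`-cover `𝒰` and every `2`-coloring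
of the `2`-element subsets of `𝒰`, some subfamily of `𝒰` which is a `γ`-cover has all of
its `2`-element subsets of one color. -/
def OmegaRamseyGamma22 (X : Type*) [TopologicalSpace X] : Prop :=
  ∀ 𝒰 : Set (Set X), IsOpenOmegaCover 𝒰 →
    ∀ c : Finset (Set X) → Fin 2,
      ∃ (j : Fin 2) (𝒱 : Set (Set X)), 𝒱 ⊆ 𝒰 ∧ IsGammaCover 𝒱 ∧
        ∀ s : Finset (Set X), ↑s ⊆ 𝒱 → s.card = 2 → c s = j

/- ### Auxiliary lemmas -/

private lemma ramsey_step (c : ℕ → ℕ → Fin 2) (S : Set ℕ) (hS : S.Infinite) :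
    ∃ (a : ℕ) (i : Fin 2) (T : Set ℕ), a ∈ S ∧ T ⊆ S ∧ T.Infinite ∧
      ∀ n ∈ T, a < n ∧ c a n = i := by
  obtain ⟨a, ha⟩ := hS.nonempty
  have h1 : (S \ Set.Iic a).Infinite := hS.diff (Set.finite_Iic a)
  have h2 : (S \ Set.Iic a) ⊆ {n ∈ S | a < n ∧ c a n = 0} ∪ {n ∈ S | a < n ∧ c a n = 1} := by
    intro n hn
    rcases hn with ⟨hnS, hle⟩
    simp only [Set.mem_Iic, not_le] at hle
    by_cases hc : c a n = 0
    · exact Or.inl ⟨hnS, hle, hc⟩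
    · exact Or.inr ⟨hnS, hle, by omega⟩
  rcases Set.infinite_union.mp (h1.mono h2) with h | h
  · exact ⟨a, 0, _, ha, fun n hn => hn.1, h, fun n hn => hn.2⟩
  · exact ⟨a, 1, _, ha, fun n hn => hn.1, h, fun n hn => hn.2⟩

/-- The infinite Ramsey theorem for pairs with two colours. -/
private lemma ramsey_pairs (c : ℕ → ℕ → Fin 2) :
    ∃ (j : Fin 2) (A : Set ℕ), A.Infinite ∧ ∀ m ∈ A, ∀ n ∈ A, m < n → c m n = j := by
  choose a i T ha hTS hT hprop using ramsey_step c
  let F : ℕ → {S : Set ℕ // S.Infinite} := fun k =>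
    Nat.rec ⟨Set.univ, Set.infinite_univ⟩ (fun _ p => ⟨T p.1 p.2, hT p.1 p.2⟩) k
  set b : ℕ → ℕ := fun k => a (F k).1 (F k).2 with hb
  set d : ℕ → Fin 2 := fun k => i (F k).1 (F k).2 with hd
  have hmem : ∀ k, b k ∈ (F k).1 := fun k => ha _ _
  have hmono : ∀ k l, k ≤ l → (F l).1 ⊆ (F k).1 := by
    intro k l hkl
    induction l with
    | zero => simp_all
    | succ m ih =>
      rcases Nat.lt_or_ge k (m+1) with h | h
      · exact (hTS (F m).1 (F m).2).trans (ih (Nat.lt_succ_iff.mp h))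
      · have : k = m + 1 := le_antisymm hkl h
        subst this; exact fun _ h => h
  have key : ∀ k l, k < l → b k < b l ∧ c (b k) (b l) = d k := by
    intro k l hkl
    have : b l ∈ T (F k).1 (F k).2 := hmono (k+1) l hkl (hmem l)
    exact hprop _ _ _ this
  have hbmono : StrictMono b := fun k l hkl => (key k l hkl).1
  have hpig : {k | d k = 0}.Infinite ∨ {k | d k = 1}.Infinite := by
    rw [← Set.infinite_union]
    have : {k | d k = 0} ∪ {k | d k = 1} = Set.univ := by
      ext k; simp only [Set.mem_union, Set.mem_setOf_eq, Set.mem_univ, iff_true]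
      omega
    rw [this]; exact Set.infinite_univ
  have main : ∀ j : Fin 2, {k | d k = j}.Infinite →
      ∃ (j' : Fin 2) (A : Set ℕ), A.Infinite ∧ ∀ m ∈ A, ∀ n ∈ A, m < n → c m n = j' := by
    intro j hj
    refine ⟨j, b '' {k | d k = j}, hj.image (hbmono.injective.injOn), ?_⟩
    rintro m ⟨k, hk, rfl⟩ n ⟨l, hl, rfl⟩ hmn
    have hkl : k < l := hbmono.lt_iff_lt.mp hmn
    rw [(key k l hkl).2]; exact hk
  rcases hpig with h | h
  · exact main 0 h
  · exact main 1 h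

private lemma eventually_iff_finite_not {p : ℕ → Prop} :
    (∀ᶠ n in Filter.atTop, p n) ↔ {n | ¬ p n}.Finite := by
  rw [← Nat.cofinite_eq_atTop, Filter.eventually_cofinite]

/-- If every point is eventually in `U n` and no `U n` is the whole space, then the range
of `U` is a `γ`-cover. -/
private lemma gammaCover_of_eventually {Y : Type*} (U : ℕ → Set Y)
    (hev : ∀ y : Y, ∀ᶠ n in Filter.atTop, y ∈ U n)
    (hne : ∀ n, U n ≠ Set.univ) : IsGammaCover (Set.range U) := by
  have hfib : ∀ y : Y, {n | y ∉ U n}.Finite := fun y =>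
    eventually_iff_finite_not.mp (hev y)
  refine ⟨?_, ?_, ?_⟩
  · intro hfin
    have : Finite (Set.range U) := hfin
    obtain ⟨⟨W, hWr⟩, hWinf⟩ := Finite.exists_infinite_fiber
      (fun n => (⟨U n, Set.mem_range_self n⟩ : Set.range U))
    have hpre : (fun n => (⟨U n, Set.mem_range_self n⟩ : Set.range U)) ⁻¹' {⟨W, hWr⟩}
        = {n | U n = W} := by
      ext n
      simp [Subtype.ext_iff]
    have hWfib : {n | U n = W}.Infinite := by
      rw [← hpre, ← Set.infinite_coe_iff]
      exact hWinf
    have hWuniv : W = Set.univ := by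
      rw [Set.eq_univ_iff_forall]
      intro y
      obtain ⟨N, hN⟩ := (hev y).exists_forall_of_atTop
      have hunb : ∃ n ∈ {n | U n = W}, N ≤ n := by
        by_contra h
        push_neg at h
        exact hWfib (Set.Finite.subset (Set.finite_Iio N) (fun n hn => h n hn))
      obtain ⟨n, hn, hNn⟩ := hunb
      rw [← hn]; exact hN n hNn
    obtain ⟨n, hn⟩ := hWr
    exact hne n (hn.trans hWuniv)
  · rw [Set.eq_univ_iff_forall]
    intro y
    obtain ⟨N, hN⟩ := (hev y).exists_forall_of_atTop
    exact ⟨U N, Set.mem_range_self N, hN N le_rfl⟩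
  · intro y
    have : {V ∈ Set.range U | y ∉ V} ⊆ U '' {n | y ∉ U n} := by
      rintro V ⟨⟨n, rfl⟩, hyV⟩
      exact ⟨n, hyV, rfl⟩
    exact ((hfib y).image U).subset this

/-- An infinite subfamily of a `γ`-cover is a `γ`-cover. -/
private lemma gammaCover_subset {Y : Type*} {𝒰 𝒱 : Set (Set Y)} (hsub : 𝒱 ⊆ 𝒰)
    (h𝒰 : IsGammaCover 𝒰) (hinf : 𝒱.Infinite) : IsGammaCover 𝒱 := by
  refine ⟨hinf, ?_, fun y => (h𝒰.2.2 y).subset (fun V hV => ⟨hsub hV.1, hV.2⟩)⟩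
  rw [Set.eq_univ_iff_forall]
  intro y
  have : ¬ 𝒱 ⊆ {U ∈ 𝒰 | y ∉ U} := fun h => hinf ((h𝒰.2.2 y).subset h)
  obtain ⟨V, hV𝒱, hV⟩ := Set.not_subset.mp this
  refine ⟨V, hV𝒱, ?_⟩
  by_contra hyV
  exact hV ⟨hsub hV𝒱, hyV⟩

/-- For a set of reals, `S1(Ω,Γ)` is equivalent to `Ω → (Γ)²₂`. -/
theorem s1OmegaGamma_iff_ramsey (X : Set ℝ) :
    S1OmegaGamma X ↔ OmegaRamseyGamma22 X := by
  constructor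
  · -- S1(Ω,Γ) → Ω → (Γ)²₂, via the infinite Ramsey theorem
    intro h 𝒰 h𝒰 c
    classical
    obtain ⟨U, hU, hγ⟩ := h (fun _ => 𝒰) (fun _ => h𝒰)
    have e : ℕ ↪ (Set.range U) := hγ.1.natEmbedding
    have hek : ∀ k, ∃ m, U m = (e k : Set X) := fun k => (e k).2
    choose φ hφ using hek
    have hinj : Function.Injective (U ∘ φ) := by
      intro k l hkl
      apply e.injective
      apply Subtype.ext
      rw [← hφ k, ← hφ l]
      exact hkl
    obtain ⟨j, A, hAinf, hA⟩ := ramsey_pairs (fun m n => c {U (φ m), U (φ n)})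
    refine ⟨j, (U ∘ φ) '' A, ?_, ?_, ?_⟩
    · rintro V ⟨k, -, rfl⟩
      exact hU (φ k)
    · refine gammaCover_subset ?_ hγ (hAinf.image hinj.injOn)
      rintro V ⟨k, -, rfl⟩
      exact ⟨φ k, rfl⟩
    · intro s hs hcard
      obtain ⟨V, W, hVW, rfl⟩ := Finset.card_eq_two.mp hcard
      have hV : V ∈ (U ∘ φ) '' A := hs (by simp)
      have hW : W ∈ (U ∘ φ) '' A := hs (by simp)
      obtain ⟨kV, hkV, rfl⟩ := hV
      obtain ⟨kW, hkW, rfl⟩ := hW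
      have hne : kV ≠ kW := fun hEq => hVW (by rw [hEq])
      rcases hne.lt_or_gt with hlt | hlt
      · exact hA _ hkV _ hkW hlt
      · have := hA _ hkW _ hkV hlt
        rwa [Finset.pair_comm] at this
  · -- Ω → (Γ)²₂ → S1(Ω,Γ)
    intro h 𝒰 h𝒰
    -- X is infinite, since it admits an ω-cover
    have hXinf : Infinite ↥X := by
      by_contra hfin
      rw [not_infinite_iff_finite] at hfin
      obtain ⟨U, hU𝒰, hsub⟩ := (h𝒰 0).2.2.2 Set.univ Set.finite_univ
      exact (h𝒰 0).2.2.1 U hU𝒰 (Set.eq_univ_of_univ_subset hsub)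
    let x : ℕ ↪ ↥X := Infinite.natEmbedding ↥X
    -- the auxiliary ω-cover of finite intersections with tags removed
    set 𝒲 : Set (Set ↥X) := {W | ∃ (n : ℕ) (u : ℕ → Set ↥X), (∀ i ≤ n, u i ∈ 𝒰 i) ∧
      W = (⋂ i ∈ Finset.range (n+1), u i) \ {x n}} with h𝒲def
    have hωprop : ∀ F : Set ↥X, F.Finite → ∃ W ∈ 𝒲, F ⊆ W := by
      intro F hF
      have hpre : {m | x m ∈ F}.Finite := hF.preimage x.injective.injOn
      obtain ⟨n, hn⟩ : ∃ n, x n ∉ F := by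
        by_contra hc
        push_neg at hc
        exact Set.infinite_univ (hpre.subset fun m _ => hc m)
      choose u hu hFu using fun i => (h𝒰 i).2.2.2 F hF
      refine ⟨(⋂ i ∈ Finset.range (n+1), u i) \ {x n},
        ⟨n, u, fun i _ => hu i, rfl⟩, ?_⟩
      intro y hy
      refine ⟨?_, fun hEq => hn (hEq ▸ hy)⟩
      simp only [Set.mem_iInter]
      exact fun i _ => hFu i hy
    have h𝒲cover : IsOpenOmegaCover 𝒲 := by
      refine ⟨?_, ?_, ?_, hωprop⟩
      · rintro W ⟨n, u, hu, rfl⟩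
        refine IsOpen.sdiff ?_ isClosed_singleton
        exact isOpen_biInter_finset fun i hi =>
          (h𝒰 i).1 _ (hu i (Nat.lt_succ_iff.mp (Finset.mem_range.mp hi)))
      · rw [Set.eq_univ_iff_forall]
        intro y
        obtain ⟨W, hW𝒲, hsub⟩ := hωprop {y} (Set.finite_singleton y)
        exact ⟨W, hW𝒲, hsub rfl⟩
      · rintro W ⟨n, u, hu, rfl⟩ hEq
        have : x n ∈ (⋂ i ∈ Finset.range (n+1), u i) \ {x n} := hEq ▸ Set.mem_univ _
        exact this.2 rfl
    obtain ⟨j, 𝒱, h𝒱𝒲, h𝒱γ, -⟩ := h 𝒲 h𝒲cover (fun _ => 0)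
    let e : ℕ ↪ ↥𝒱 := h𝒱γ.1.natEmbedding
    set V : ℕ → Set ↥X := fun k => (e k : Set ↥X) with hVdef
    have hVinj : Function.Injective V := Subtype.val_injective.comp e.injective
    have hV𝒱 : ∀ k, V k ∈ 𝒱 := fun k => (e k).2
    have hmem : ∀ k, ∃ (m : ℕ) (u : ℕ → Set ↥X), (∀ i ≤ m, u i ∈ 𝒰 i) ∧
        V k = (⋂ i ∈ Finset.range (m+1), u i) \ {x m} := fun k => h𝒱𝒲 (hV𝒱 k)
    choose n u hu hrep using hmem
    have hVsub : ∀ k, ∀ i ≤ n k, V k ⊆ u k i := by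
      intro k i hi y hy
      rw [hrep k] at hy
      have := hy.1
      simp only [Set.mem_iInter] at this
      exact this i (Finset.mem_range.mpr (Nat.lt_succ_iff.mpr hi))
    have hVx : ∀ k, x (n k) ∉ V k := by
      intro k hk
      rw [hrep k] at hk
      exact hk.2 rfl
    have hfib : ∀ m, {k | n k = m}.Finite := by
      intro m
      by_contra hinf
      have hinf' : {k | n k = m}.Infinite := hinf
      refine (hinf'.image hVinj.injOn) ?_
      refine (h𝒱γ.2.2 (x m)).subset ?_
      rintro W ⟨k, hk, rfl⟩
      exact ⟨hV𝒱 k, by rw [← hk]; exact hVx k⟩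
    have hK : ∀ m : ℕ, ∃ k, m ≤ n k := by
      intro m
      have hflt : {k | n k < m}.Finite := by
        refine (Set.Finite.biUnion (Finset.range m).finite_toSet
          (fun i _ => hfib i)).subset ?_
        intro k hk
        simp only [Finset.coe_range, Set.mem_iUnion, Set.mem_Iio, Set.mem_setOf_eq]
        exact ⟨n k, hk, rfl⟩
      by_contra hc
      push_neg at hc
      exact Set.infinite_univ (hflt.subset fun k _ => hc k)
    choose K hKle using hK
    refine ⟨fun m => u (K m) m, fun m => hu (K m) m (hKle m), ?_⟩
    refine gammaCover_of_eventually _ ?_ (fun m => (h𝒰 m).2.2.1 _ (hu (K m) m (hKle m)))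
    intro y
    rw [eventually_iff_finite_not]
    have hBk : {k | y ∉ V k}.Finite := by
      refine Set.Finite.of_finite_image ?_ hVinj.injOn
      refine (h𝒱γ.2.2 y).subset ?_
      rintro W ⟨k, hk, rfl⟩
      exact ⟨hV𝒱 k, hk⟩
    refine ((hBk.biUnion (fun k _ => (Set.finite_Iic (n k)).subset
      (fun m (hm : K m = k) => hm ▸ hKle m))).subset ?_)
    intro m hm
    simp only [Set.mem_setOf_eq] at hm
    have : y ∉ V (K m) := fun hy => hm (hVsub (K m) m (hKle m) hy)
    simp only [Set.mem_iUnion, Set.mem_setOf_eq]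
    exact ⟨K m, Set.mem_iUnion.mpr ⟨this, rfl⟩⟩
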